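/- For any two points 𝐳, 𝐰 of the bidisk, the equidistant hypersurface E(𝐳,𝐰) = {𝐱 : ρ(𝐱,𝐳) = ρ(𝐱,𝐰)} is a connected subset of the bidisk. -/

import Mathlib

open UpperHalfPlane

noncomputable section

/-- The bidisk `ℍ × ℍ` with the `ℓ²` product metric. -/
abbrev Bidisk : Type := WithLp 2 (UpperHalfPlane × UpperHalfPlane)

namespace EqHyp

open Real


/-- arcosh -/
noncomputable def A (y : ℝ) : ℝ := arsinh (√(y ^ 2 - 1))

lemma A_nonneg (y : ℝ) : 0 ≤ A y := by
  rw [A, ← arsinh_zero, arsinh_le_arsinh]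
  exact sqrt_nonneg _

lemma cosh_A {y : ℝ} (hy : 1 ≤ y) : cosh (A y) = y := by
  rw [A, cosh_arsinh, sq_sqrt (by nlinarith)]
  rw [show 1 + (y ^ 2 - 1) = y ^ 2 by ring, sqrt_sq (by linarith)]

lemma A_cosh {t : ℝ} (ht : 0 ≤ t) : A (cosh t) = t := by
  rw [A, show cosh t ^ 2 - 1 = sinh t ^ 2 by rw [cosh_sq]; ring,
    sqrt_sq (sinh_nonneg_iff.2 ht), arsinh_sinh]

lemma A_pos {y : ℝ} (hy : 1 < y) : 0 < A y := by
  rw [A, ← arsinh_zero, arsinh_lt_arsinh]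
  exact sqrt_pos.2 (by nlinarith)

lemma A_le {y M : ℝ} (hy : 1 ≤ y) (hM : 0 ≤ M) (h : y ≤ cosh M) : A y ≤ M := by
  have h2 : cosh (A y) ≤ cosh M := by rw [cosh_A hy]; exact h
  rcases eq_or_lt_of_le h2 with h3 | h3
  · have : |A y| = |M| := by
      by_contra hne
      rcases lt_or_gt_of_ne hne with h4 | h4
      · exact absurd (cosh_lt_cosh.2 h4) (by rw [h3]; exact lt_irrefl _)
      · exact absurd (cosh_lt_cosh.2 h4) (by rw [h3]; exact lt_irrefl _)
    calc A y ≤ |A y| := le_abs_self _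
    _ = |M| := this
    _ = M := abs_of_nonneg hM
  · have := cosh_lt_cosh.1 h3
    calc A y ≤ |A y| := le_abs_self _
    _ ≤ |M| := this.le
    _ = M := abs_of_nonneg hM

lemma le_A {y M : ℝ} (hy : 1 ≤ y) (h : cosh M ≤ y) : M ≤ A y := by
  have h2 : cosh M ≤ cosh (A y) := by rw [cosh_A hy]; exact h
  rcases eq_or_lt_of_le h2 with h3 | h3
  · have : |M| = |A y| := by
      by_contra hne
      rcases lt_or_gt_of_ne hne with h4 | h4
      · exact absurd (cosh_lt_cosh.2 h4) (by rw [h3]; exact lt_irrefl _)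
      · exact absurd (cosh_lt_cosh.2 h4) (by rw [h3]; exact lt_irrefl _)
    calc M ≤ |M| := le_abs_self _
    _ = |A y| := this
    _ = A y := abs_of_nonneg (A_nonneg y)
  · have := cosh_lt_cosh.1 h3
    calc M ≤ |M| := le_abs_self _
    _ ≤ |A y| := this.le
    _ = A y := abs_of_nonneg (A_nonneg y)

lemma A_strictMonoOn : StrictMonoOn A (Set.Ici 1) := by
  intro a ha b hb hab
  rw [A, A, arsinh_lt_arsinh]
  apply sqrt_lt_sqrt (by simp at ha; nlinarith)
  simp only [Set.mem_Ici] at ha hb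
  nlinarith

lemma continuous_A : Continuous A :=
  continuous_arsinh.comp (continuous_sqrt.comp (by continuity))



noncomputable def Phi (C t : ℝ) : ℝ := A (C * cosh t) ^ 2

noncomputable def DPhi (C t : ℝ) : ℝ :=
  2 * A (C * cosh t) * (C * sinh t / √((C * cosh t) ^ 2 - 1))

lemma inner_pos {C : ℝ} (hC : 1 < C) (t : ℝ) : 0 < (C * cosh t) ^ 2 - 1 := by
  have h := one_le_cosh t
  have h2 : 1 < C * cosh t := by nlinarith
  nlinarith

lemma hasDerivAt_Phi {C : ℝ} (hC : 1 < C) (t : ℝ) :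
    HasDerivAt (fun t => Phi C t) (DPhi C t) t := by
  have hcosh : 0 < C * cosh t := by positivity
  have hpos := inner_pos hC t
  have h1 : HasDerivAt (fun t => (C * cosh t) ^ 2 - 1)
      (2 * (C * cosh t) * (C * sinh t)) t := by
    have := (((Real.hasDerivAt_cosh t).const_mul C).fun_pow 2).sub_const 1
    refine this.congr_deriv ?_
    simp only [Nat.cast_ofNat, pow_one]
    ring
  have h2 := h1.sqrt hpos.ne'
  have h3 := (Real.hasDerivAt_arsinh (√((C * cosh t) ^ 2 - 1))).comp t h2
  have h4 := h3.fun_pow 2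
  have hsq : √((C * cosh t) ^ 2 - 1) ^ 2 = (C * cosh t) ^ 2 - 1 := sq_sqrt hpos.le
  have hs : √(1 + √((C * cosh t) ^ 2 - 1) ^ 2) = C * cosh t := by
    rw [hsq, show 1 + ((C * cosh t) ^ 2 - 1) = (C * cosh t) ^ 2 by ring, sqrt_sq hcosh.le]
  refine h4.congr_deriv ?_
  rw [hs]
  have hsn : √((C * cosh t) ^ 2 - 1) ≠ 0 := (sqrt_pos.2 hpos).ne'
  simp only [Function.comp_apply, pow_one, Nat.cast_ofNat]
  rw [DPhi, A]
  field_simp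
  ring

lemma DPhi_neg (C t : ℝ) : DPhi C (-t) = - DPhi C t := by
  rw [DPhi, DPhi, Real.cosh_neg, Real.sinh_neg]
  ring

lemma DPhi_zero (C : ℝ) : DPhi C 0 = 0 := by
  rw [DPhi, Real.sinh_zero]
  ring

lemma DPhi_strictMonoOn {C : ℝ} (hC : 1 < C) : StrictMonoOn (DPhi C) (Set.Ici 0) := by
  have ha : (0:ℝ) < C ^ 2 - 1 := by nlinarith
  have key : ∀ a b : ℝ, 0 ≤ a → a < b →
      a / √(a ^ 2 + (C ^ 2 - 1)) < b / √(b ^ 2 + (C ^ 2 - 1)) := by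
    intro a b hb hab
    have hd1 : 0 < √(a ^ 2 + (C ^ 2 - 1)) := sqrt_pos.2 (by nlinarith [sq_nonneg a])
    have hd2 : 0 < √(b ^ 2 + (C ^ 2 - 1)) := sqrt_pos.2 (by nlinarith [sq_nonneg b])
    rw [div_lt_div_iff₀ hd1 hd2]
    have hq1 : √(a ^ 2 + (C ^ 2 - 1)) ^ 2 = a ^ 2 + (C ^ 2 - 1) :=
      sq_sqrt (by nlinarith [sq_nonneg a])
    have hq2 : √(b ^ 2 + (C ^ 2 - 1)) ^ 2 = b ^ 2 + (C ^ 2 - 1) :=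
      sq_sqrt (by nlinarith [sq_nonneg b])
    have h2n : 0 ≤ b * √(a ^ 2 + (C ^ 2 - 1)) := mul_nonneg (by linarith) (sqrt_nonneg _)
    apply lt_of_pow_lt_pow_left₀ 2 h2n
    rw [mul_pow, mul_pow, hq1, hq2]
    have hsq : a ^ 2 < b ^ 2 := by nlinarith
    nlinarith [mul_lt_mul_of_pos_right hsq ha]
  intro t1 ht1 t2 ht2 h12
  simp only [Set.mem_Ici] at ht1 ht2
  have hC1 : ∀ t, 1 < C * cosh t := fun t => by nlinarith [one_le_cosh t]
  have hA1 : 0 < A (C * cosh t1) := A_pos (hC1 t1)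
  have hA2 : 0 < A (C * cosh t2) := A_pos (hC1 t2)
  have hAlt : A (C * cosh t1) < A (C * cosh t2) := by
    apply A_strictMonoOn (Set.mem_Ici.2 (hC1 t1).le) (Set.mem_Ici.2 (hC1 t2).le)
    have : cosh t1 < cosh t2 := by
      rw [cosh_lt_cosh, abs_of_nonneg ht1, abs_of_nonneg ht2]; exact h12
    nlinarith
  have hS1n : 0 ≤ C * sinh t1 := by
    have := sinh_nonneg_iff.2 ht1; positivity
  have hSlt : C * sinh t1 < C * sinh t2 := by
    have : sinh t1 < sinh t2 := Real.sinh_lt_sinh.2 h12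
    nlinarith
  have hin1 : (C * cosh t1) ^ 2 - 1 = (C * sinh t1) ^ 2 + (C ^ 2 - 1) := by
    have := cosh_sq t1; nlinarith
  have hin2 : (C * cosh t2) ^ 2 - 1 = (C * sinh t2) ^ 2 + (C ^ 2 - 1) := by
    have := cosh_sq t2; nlinarith
  have hh := key _ _ hS1n hSlt
  have hh1n : 0 ≤ C * sinh t1 / √((C * sinh t1) ^ 2 + (C ^ 2 - 1)) := by
    apply div_nonneg hS1n (sqrt_nonneg _)
  have hh2p : 0 < C * sinh t2 / √((C * sinh t2) ^ 2 + (C ^ 2 - 1)) :=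
    lt_of_le_of_lt hh1n hh
  rw [DPhi, DPhi, hin1, hin2]
  calc 2 * A (C * cosh t1) * (C * sinh t1 / √((C * sinh t1) ^ 2 + (C ^ 2 - 1)))
      ≤ 2 * A (C * cosh t1) * (C * sinh t2 / √((C * sinh t2) ^ 2 + (C ^ 2 - 1))) := by
        nlinarith
    _ < 2 * A (C * cosh t2) * (C * sinh t2 / √((C * sinh t2) ^ 2 + (C ^ 2 - 1))) := by
        nlinarith

lemma DPhi_strictMono {C : ℝ} (hC : 1 < C) : StrictMono (DPhi C) := by
  have hmono := DPhi_strictMonoOn hC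
  have hpos : ∀ t, 0 < t → 0 < DPhi C t := by
    intro t ht
    have := hmono (Set.mem_Ici.2 le_rfl) (Set.mem_Ici.2 ht.le) ht
    rwa [DPhi_zero] at this
  intro t1 t2 h12
  rcases le_or_gt 0 t1 with h | h
  · exact hmono (Set.mem_Ici.2 h) (Set.mem_Ici.2 (h.trans h12.le)) h12
  · rcases le_or_gt 0 t2 with h2 | h2
    · have hneg : DPhi C t1 < 0 := by
        have h3 : 0 < DPhi C (-t1) := hpos _ (by linarith)
        have h4 := DPhi_neg C t1
        linarith
      rcases eq_or_lt_of_le h2 with h5 | h5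
      · rw [← h5, DPhi_zero]; exact hneg
      · exact hneg.trans (hpos _ h5)
    · have := hmono (Set.mem_Ici.2 (by linarith : (0:ℝ) ≤ -t2))
        (Set.mem_Ici.2 (by linarith : (0:ℝ) ≤ -t1)) (by linarith)
      have e1 := DPhi_neg C t1
      have e2 := DPhi_neg C t2
      linarith




noncomputable def G (q t s : ℝ) : ℝ := Phi (cosh s) t - Phi (cosh s) (t - q)

lemma Phi_one (t : ℝ) : Phi 1 t = t ^ 2 := by
  rw [Phi, one_mul, ← Real.cosh_abs, A_cosh (abs_nonneg t), sq_abs]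

lemma G_strictMono {q : ℝ} (hq : 0 < q) (s : ℝ) : StrictMono (fun t => G q t s) := by
  rcases eq_or_lt_of_le (one_le_cosh s) with hC | hC
  · intro a b hab
    simp only [G, ← hC, Phi_one]
    nlinarith
  · apply strictMono_of_deriv_pos
    intro x
    have hd : HasDerivAt (fun t => G q t s) (DPhi (cosh s) x - DPhi (cosh s) (x - q)) x := by
      have h1 := hasDerivAt_Phi hC x
      have h2 := (hasDerivAt_Phi hC (x - q)).comp x ((hasDerivAt_id x).sub_const q)
      exact (by simpa using h1.fun_sub h2 : HasDerivAt (fun t => Phi (cosh s) t - Phi (cosh s) (t - q))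
        (DPhi (cosh s) x - DPhi (cosh s) (x - q)) x)
    rw [hd.deriv]
    have := DPhi_strictMono hC (show x - q < x by linarith)
    linarith

lemma continuous_G (q : ℝ) : Continuous (fun p : ℝ × ℝ => G q p.1 p.2) := by
  unfold G Phi
  apply Continuous.sub
  · exact (continuous_A.comp ((Real.continuous_cosh.comp continuous_snd).mul
      (Real.continuous_cosh.comp continuous_fst))).pow 2
  · exact (continuous_A.comp ((Real.continuous_cosh.comp continuous_snd).mul
      (Real.continuous_cosh.comp (continuous_fst.sub continuous_const)))).pow 2

lemma one_le_C_cosh (s t : ℝ) : 1 ≤ cosh s * cosh t := by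
  nlinarith [one_le_cosh s, one_le_cosh t]

lemma A_lower (C t : ℝ) (hC : 1 ≤ C) : t + log C ≤ A (C * cosh t) := by
  have hCpos : (0:ℝ) < C := by linarith
  apply le_A (by nlinarith [one_le_cosh t])
  have e1 : exp (t + log C) = exp t * C := by rw [exp_add, exp_log hCpos]
  have e2 : exp (-(t + log C)) = exp (-t) / C := by
    rw [neg_add, exp_add, show exp (-log C) = C⁻¹ by rw [exp_neg, exp_log hCpos],
      div_eq_mul_inv]
  rw [cosh_eq, cosh_eq, e1, e2]
  have h1 : exp (-t) / C ≤ C * exp (-t) := by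
    rw [div_le_iff₀ hCpos]
    nlinarith [mul_nonneg (show (0:ℝ) ≤ C * C - 1 by nlinarith) (exp_pos (-t)).le]
  linarith

lemma A_upper (C r : ℝ) (hC : 1 ≤ C) (hr : 0 ≤ r) :
    A (C * cosh r) ≤ r + log C + log (1 + exp (-(2 * r))) := by
  have hCpos : (0:ℝ) < C := by linarith
  have hlog1 : 0 ≤ log C := log_nonneg hC
  have hlog2 : 0 ≤ log (1 + exp (-(2 * r))) := log_nonneg (by nlinarith [exp_pos (-(2*r))])
  apply A_le (by nlinarith [one_le_cosh r]) (by linarith)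
  have hexpM : exp (r + log C + log (1 + exp (-(2 * r)))) = C * (exp r + exp (-r)) := by
    rw [exp_add, exp_add, exp_log hCpos, exp_log (by positivity)]
    have h2 : exp r * exp (-(2 * r)) = exp (-r) := by
      rw [← exp_add, show r + -(2 * r) = -r by ring]
    linear_combination C * h2
  have hM : C * cosh r ≤ exp (r + log C + log (1 + exp (-(2 * r)))) / 2 := by
    rw [hexpM, cosh_eq]; ring_nf; linarith [exp_pos r]
  calc C * cosh r ≤ exp (r + log C + log (1 + exp (-(2 * r)))) / 2 := hM
    _ ≤ cosh (r + log C + log (1 + exp (-(2 * r)))) := by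
        rw [cosh_eq]; linarith [exp_pos (-(r + log C + log (1 + exp (-(2 * r)))))]

lemma G_sym (q t s : ℝ) : G q (q - t) s = - G q t s := by
  unfold G Phi
  rw [show q - t - q = -t by ring, Real.cosh_neg,
    show q - t = -(t - q) by ring, Real.cosh_neg]
  ring

lemma G_lower_bound {q : ℝ} (hq : 0 < q) (s : ℝ) :
    ∀ t, max (q + 1) (q - log (q / 2) / 2) ≤ t → q / 2 * t ≤ G q t s := by
  intro t ht
  set C := cosh s with hCdef
  have hC : 1 ≤ C := one_le_cosh s
  have ht1 : q + 1 ≤ t := le_trans (le_max_left _ _) ht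
  have ht2 : q - log (q / 2) / 2 ≤ t := le_trans (le_max_right _ _) ht
  have htq : 0 ≤ t - q := by linarith
  have hu1 : t + log C ≤ A (C * cosh t) := A_lower C t hC
  have hu2 : A (C * cosh (t - q)) ≤ (t - q) + log C + log (1 + exp (-(2 * (t - q)))) :=
    A_upper C (t - q) hC htq
  have hexp : exp (-(2 * (t - q))) ≤ q / 2 := by
    rw [show q / 2 = exp (log (q / 2)) by rw [exp_log (by linarith)]]
    apply exp_le_exp.2
    linarith
  have hlogle : log (1 + exp (-(2 * (t - q)))) ≤ q / 2 := by
    have h1 : log (1 + exp (-(2 * (t - q)))) ≤ (1 + exp (-(2 * (t - q)))) - 1 :=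
      Real.log_le_sub_one_of_pos (by positivity)
    linarith
  have hA2 : A (C * cosh (t - q)) ≤ t - q / 2 + log C := by linarith
  have hd : q / 2 ≤ A (C * cosh t) - A (C * cosh (t - q)) := by linarith
  have hs : t ≤ A (C * cosh t) + A (C * cosh (t - q)) := by
    have := A_nonneg (C * cosh (t - q))
    have hlogC : 0 ≤ log C := log_nonneg hC
    linarith
  have htpos : 0 < t := by linarith
  have hGq : G q t s = (A (C * cosh t) - A (C * cosh (t - q))) *
      (A (C * cosh t) + A (C * cosh (t - q))) := by
    unfold G Phi; ring
  rw [hGq]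
  apply mul_le_mul hd hs htpos.le (by linarith)

lemma G_tendsto_atTop {q : ℝ} (hq : 0 < q) (s : ℝ) :
    Filter.Tendsto (fun t => G q t s) Filter.atTop Filter.atTop := by
  apply Filter.tendsto_atTop_mono' _ _
    ((Filter.tendsto_id (α := ℝ)).const_mul_atTop (half_pos hq))
  filter_upwards [Filter.eventually_ge_atTop (max (q + 1) (q - log (q / 2) / 2))] with t ht
  exact G_lower_bound hq s t ht

lemma G_tendsto_atBot {q : ℝ} (hq : 0 < q) (s : ℝ) :
    Filter.Tendsto (fun t => G q t s) Filter.atBot Filter.atBot := by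
  have heq : (fun t => G q t s) = (fun t => - G q (q - t) s) := by
    funext t
    have h := G_sym q (q - t) s
    rw [show q - (q - t) = t by ring] at h
    rw [h]
  rw [heq]
  apply Filter.tendsto_neg_atTop_atBot.comp
  apply (G_tendsto_atTop hq s).comp
  have h2 : Filter.Tendsto (fun t : ℝ => -t) Filter.atBot Filter.atTop :=
    Filter.tendsto_neg_atBot_atTop
  have h3 := Filter.tendsto_atTop_add_const_left Filter.atBot q h2
  have h4 : (fun t : ℝ => q - t) = fun t : ℝ => q + -t := by funext t; ring
  show Filter.Tendsto (fun t : ℝ => q - t) Filter.atBot Filter.atTop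
  rw [h4]
  exact h3

lemma continuous_G1 (q s : ℝ) : Continuous (fun t : ℝ => G q t s) := by
  unfold G Phi
  apply Continuous.sub
  · exact (continuous_A.comp (continuous_const.mul Real.continuous_cosh)).pow 2
  · exact (continuous_A.comp (continuous_const.mul
      (Real.continuous_cosh.comp (continuous_id.sub continuous_const)))).pow 2

lemma G_surjective {q : ℝ} (hq : 0 < q) (s : ℝ) : Function.Surjective (fun t => G q t s) :=
  (continuous_G1 q s).surjective (G_tendsto_atTop hq s) (G_tendsto_atBot hq s)


lemma exists_tau_abs (F : ℝ × ℝ → ℝ) (hcont : Continuous F)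
    (hmono : ∀ s, StrictMono (fun t => F (t, s)))
    (hsurj : ∀ s, Function.Surjective (fun t => F (t, s))) :
    ∃ τ : ℝ × ℝ → ℝ, Continuous τ ∧ ∀ v s, F (τ (v, s), s) = v := by
  have hch : ∀ s v, ∃ t, F (t, s) = v := fun s v => hsurj s v
  choose τ0 hτ0 using hch
  refine ⟨fun p => τ0 p.2 p.1, ?_, fun v s => hτ0 s v⟩
  rw [continuous_iff_continuousAt]
  rintro ⟨v₀, s₀⟩
  rw [ContinuousAt, Metric.tendsto_nhds]
  intro ε hε
  set t₀ := τ0 s₀ v₀ with ht₀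
  have h1 : F (t₀ - ε, s₀) < v₀ := by
    have := hmono s₀ (show t₀ - ε < t₀ by linarith)
    beta_reduce at this; rw [show F (t₀, s₀) = v₀ from hτ0 s₀ v₀] at this; exact this
  have h2 : v₀ < F (t₀ + ε, s₀) := by
    have := hmono s₀ (show t₀ < t₀ + ε by linarith)
    beta_reduce at this; rw [show F (t₀, s₀) = v₀ from hτ0 s₀ v₀] at this; exact this
  have hUopen : IsOpen {p : ℝ × ℝ | F (t₀ - ε, p.2) < p.1 ∧ p.1 < F (t₀ + ε, p.2)} := by
    apply IsOpen.inter
    · exact isOpen_lt (hcont.comp (continuous_const.prodMk continuous_snd)) continuous_fst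
    · exact isOpen_lt continuous_fst (hcont.comp (continuous_const.prodMk continuous_snd))
  have hmem : (v₀, s₀) ∈ {p : ℝ × ℝ | F (t₀ - ε, p.2) < p.1 ∧ p.1 < F (t₀ + ε, p.2)} :=
    ⟨h1, h2⟩
  filter_upwards [hUopen.mem_nhds hmem] with p hp
  have hG : F (τ0 p.2 p.1, p.2) = p.1 := hτ0 _ _
  have l1 : t₀ - ε < τ0 p.2 p.1 := by
    by_contra hcon
    push_neg at hcon
    have := (hmono p.2).monotone hcon
    rw [hG] at this
    exact absurd hp.1 (not_lt.2 this)
  have l2 : τ0 p.2 p.1 < t₀ + ε := by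
    by_contra hcon
    push_neg at hcon
    have := (hmono p.2).monotone hcon
    rw [hG] at this
    exact absurd hp.2 (not_lt.2 this)
  rw [Real.dist_eq, abs_sub_lt_iff]
  constructor <;> linarith

lemma exists_tau {q : ℝ} (hq : 0 < q) :
    ∃ τ : ℝ × ℝ → ℝ, Continuous τ ∧ ∀ v s, G q (τ (v, s)) s = v := by
  obtain ⟨τ, hc, hτ⟩ := exists_tau_abs (fun p => G q p.1 p.2) (continuous_G q)
    (fun s => G_strictMono hq s) (fun s => G_surjective hq s)
  exact ⟨τ, hc, hτ⟩


open UpperHalfPlane in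
noncomputable def pt (p : ℝ) : ℍ :=
  ⟨(Real.exp p : ℂ) * Complex.I, by
    simp only [Complex.mul_im, Complex.ofReal_re, Complex.ofReal_im, Complex.I_re,
      Complex.I_im, mul_one, mul_zero, add_zero, zero_mul]
    exact Real.exp_pos p⟩

open UpperHalfPlane in
noncomputable def X (t s : ℝ) : ℍ :=
  ⟨((Real.exp t * Real.tanh s : ℝ) : ℂ) + ((Real.exp t / Real.cosh s : ℝ) : ℂ) * Complex.I, by
    simp only [Complex.add_im, Complex.ofReal_im, Complex.mul_im, Complex.ofReal_re,
      Complex.I_re, Complex.I_im, mul_one, mul_zero, add_zero, zero_mul, zero_add]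
    exact div_pos (Real.exp_pos t) (Real.cosh_pos s)⟩

open UpperHalfPlane

@[simp] lemma pt_re (p : ℝ) : (pt p).re = 0 := by
  show ((Real.exp p : ℂ) * Complex.I).re = 0
  simp only [Complex.mul_re, Complex.ofReal_re, Complex.ofReal_im, Complex.I_re, Complex.I_im,
    mul_one, mul_zero, zero_mul, sub_zero]

@[simp] lemma pt_im (p : ℝ) : (pt p).im = exp p := by
  show ((Real.exp p : ℂ) * Complex.I).im = exp p
  simp only [Complex.mul_im, Complex.ofReal_re, Complex.ofReal_im, Complex.I_re, Complex.I_im,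
    mul_one, mul_zero, add_zero, zero_mul]

@[simp] lemma X_re (t s : ℝ) : (X t s).re = exp t * tanh s := by
  show (((Real.exp t * Real.tanh s : ℝ) : ℂ) + ((Real.exp t / Real.cosh s : ℝ) : ℂ) * Complex.I).re = _
  simp only [Complex.add_re, Complex.ofReal_re, Complex.mul_re, Complex.ofReal_im, Complex.I_re,
    Complex.I_im, mul_one, mul_zero, zero_mul, sub_zero, zero_sub, add_zero]

@[simp] lemma X_im (t s : ℝ) : (X t s).im = exp t / cosh s := by
  show (((Real.exp t * Real.tanh s : ℝ) : ℂ) + ((Real.exp t / Real.cosh s : ℝ) : ℂ) * Complex.I).im = _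
  simp only [Complex.add_im, Complex.ofReal_im, Complex.mul_im, Complex.ofReal_re, Complex.I_re,
    Complex.I_im, mul_one, mul_zero, add_zero, zero_mul, zero_add]

lemma X_norm (t s : ℝ) : (X t s).re ^ 2 + (X t s).im ^ 2 = exp t ^ 2 := by
  rw [X_re, X_im, Real.tanh_eq_sinh_div_cosh]
  have hc := Real.cosh_pos s
  field_simp
  linear_combination (-1 : ℝ) * Real.cosh_sq s


lemma dist_X_pt (t s p : ℝ) : dist (X t s) (pt p) = A (cosh s * cosh (t - p)) := by
  have himpos : 0 < (X t s).im := (X t s).im_pos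
  have hd2 : dist ((X t s : ℂ)) ((pt p : ℂ)) ^ 2
      = exp t ^ 2 + exp p ^ 2 - 2 * exp p * (X t s).im := by
    rw [Complex.dist_eq_re_im, sq_sqrt (by positivity)]
    simp only [UpperHalfPlane.coe_re, UpperHalfPlane.coe_im, pt_re, pt_im]
    linear_combination X_norm t s
  have hch : cosh (dist (X t s) (pt p)) = cosh s * cosh (t - p) := by
    rw [UpperHalfPlane.cosh_dist, hd2, X_im, pt_im,
      show cosh (t - p) = (exp (t - p) + exp (-(t - p))) / 2 from Real.cosh_eq _,
      Real.exp_sub, show -(t - p) = p - t by ring, Real.exp_sub]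
    have h1 := Real.exp_pos t
    have h2 := Real.exp_pos p
    have h3 := Real.cosh_pos s
    field_simp
    ring
  calc dist (X t s) (pt p) = A (cosh (dist (X t s) (pt p))) := (A_cosh dist_nonneg).symm
    _ = A (cosh s * cosh (t - p)) := by rw [hch]

lemma X_surj (x : ℍ) : ∃ t s, X t s = x := by
  have hre := x.im_pos
  set R := √(x.re ^ 2 + x.im ^ 2) with hR
  have hRpos : 0 < R := Real.sqrt_pos.2 (by positivity)
  have hR2 : R ^ 2 = x.re ^ 2 + x.im ^ 2 := Real.sq_sqrt (by positivity)
  refine ⟨Real.log R, arsinh (x.re / x.im), ?_⟩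
  have hsinh : sinh (arsinh (x.re / x.im)) = x.re / x.im := Real.sinh_arsinh _
  have hcosh : cosh (arsinh (x.re / x.im)) = R / x.im := by
    rw [Real.cosh_arsinh]
    rw [show 1 + (x.re / x.im) ^ 2 = (R / x.im) ^ 2 by
      rw [div_pow, div_pow, hR2]; field_simp; ring]
    exact Real.sqrt_sq (by positivity)
  have hexp : exp (Real.log R) = R := Real.exp_log hRpos
  apply UpperHalfPlane.ext'
  · rw [X_re, Real.tanh_eq_sinh_div_cosh, hsinh, hcosh, hexp]
    field_simp
  · rw [X_im, hcosh, hexp]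
    field_simp


lemma continuous_X {α : Type*} [TopologicalSpace α] {f g : α → ℝ}
    (hf : Continuous f) (hg : Continuous g) : Continuous fun a => X (f a) (g a) := by
  apply continuous_induced_rng.2
  have h1 : Continuous fun a => ((Real.exp (f a) * Real.tanh (g a) : ℝ) : ℂ) := by
    apply Complex.continuous_ofReal.comp
    have heq : (fun a => Real.exp (f a) * Real.tanh (g a))
        = fun a => Real.exp (f a) * (Real.sinh (g a) / Real.cosh (g a)) := by
      funext a; rw [Real.tanh_eq_sinh_div_cosh]
    rw [heq]
    exact (Real.continuous_exp.comp hf).mul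
      ((Real.continuous_sinh.comp hg).div (Real.continuous_cosh.comp hg)
        fun a => (Real.cosh_pos _).ne')
  have h2 : Continuous fun a => (((Real.exp (f a) / Real.cosh (g a) : ℝ)) : ℂ) :=
    Complex.continuous_ofReal.comp ((Real.continuous_exp.comp hf).div
      (Real.continuous_cosh.comp hg) fun a => (Real.cosh_pos _).ne')
  exact h1.add (h2.mul continuous_const)

lemma key_normalized {q : ℝ} (hq : 0 < q) :
    ∃ Q : ℝ × ℝ → ℍ, Continuous Q ∧ Function.Surjective Q ∧
      ∀ v s, dist (Q (v, s)) (pt 0) ^ 2 - dist (Q (v, s)) (pt q) ^ 2 = v := by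
  obtain ⟨τ, hτc, hτ⟩ := exists_tau hq
  refine ⟨fun p => X (τ p) p.2, continuous_X hτc continuous_snd, ?_, ?_⟩
  · intro x
    obtain ⟨t, s, hx⟩ := X_surj x
    refine ⟨(G q t s, s), ?_⟩
    have h1 : G q (τ (G q t s, s)) s = G q t s := hτ _ _
    have h2 : τ (G q t s, s) = t := (G_strictMono hq s).injective h1
    show X (τ (G q t s, s)) s = x
    rw [h2, hx]
  · intro v s
    show dist (X (τ (v, s)) s) (pt 0) ^ 2 - dist (X (τ (v, s)) s) (pt q) ^ 2 = v
    rw [dist_X_pt, dist_X_pt, sub_zero]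
    have h := hτ v s
    conv_rhs => rw [← h]
    simp only [G, Phi]


/-! ### Isometries of ℍ -/

noncomputable def vaddIso (a : ℝ) : ℍ ≃ᵢ ℍ where
  toFun := fun x => a +ᵥ x
  invFun := fun x => (-a) +ᵥ x
  left_inv := fun x => by show -a +ᵥ (a +ᵥ x) = x; rw [vadd_vadd]; simp
  right_inv := fun x => by show a +ᵥ (-a +ᵥ x) = x; rw [vadd_vadd]; simp
  isometry_toFun := isometry_real_vadd a

noncomputable def posIso (a : {x : ℝ // 0 < x}) : ℍ ≃ᵢ ℍ where
  toFun := fun x => a • x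
  invFun := fun x => a⁻¹ • x
  left_inv := fun x => by show a⁻¹ • (a • x) = x; rw [smul_smul, inv_mul_cancel, one_smul]
  right_inv := fun x => by show a • (a⁻¹ • x) = x; rw [smul_smul, mul_inv_cancel, one_smul]
  isometry_toFun := isometry_pos_mul a

lemma smul_re_of_entries (g : Matrix.SpecialLinearGroup (Fin 2) ℝ) (a b cc d : ℝ)
    (hg : (g : Matrix (Fin 2) (Fin 2) ℝ) = !![a, b; cc, d]) (x : ℍ) :
    (g • x).re = ((a * x.re + b) * (cc * x.re + d) + a * cc * x.im ^ 2)
      / ((cc * x.re + d) ^ 2 + (cc * x.im) ^ 2) := by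
  rw [UpperHalfPlane.specialLinearGroup_apply, mk_re]
  rw [show g 0 0 = a by rw [hg]; simp,
      show g 0 1 = b by rw [hg]; simp,
      show g 1 0 = cc by rw [hg]; simp,
      show g 1 1 = d by rw [hg]; simp]
  rw [Complex.div_re]
  simp only [Complex.add_re, Complex.mul_re, Complex.ofReal_re, Complex.ofReal_im,
    UpperHalfPlane.coe_re, UpperHalfPlane.coe_im, Complex.add_im, Complex.mul_im,
    Complex.normSq_apply]
  simp only [Algebra.algebraMap_self, RingHom.id_apply]
  field_simp
  ring

lemma smul_im_of_entries (g : Matrix.SpecialLinearGroup (Fin 2) ℝ) (a b cc d : ℝ)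
    (hg : (g : Matrix (Fin 2) (Fin 2) ℝ) = !![a, b; cc, d]) (x : ℍ) :
    (g • x).im = (a * d - b * cc) * x.im
      / ((cc * x.re + d) ^ 2 + (cc * x.im) ^ 2) := by
  rw [UpperHalfPlane.specialLinearGroup_apply, mk_im]
  rw [show g 0 0 = a by rw [hg]; simp,
      show g 0 1 = b by rw [hg]; simp,
      show g 1 0 = cc by rw [hg]; simp,
      show g 1 1 = d by rw [hg]; simp]
  rw [Complex.div_im]
  simp only [Complex.add_re, Complex.mul_re, Complex.ofReal_re, Complex.ofReal_im,
    UpperHalfPlane.coe_re, UpperHalfPlane.coe_im, Complex.add_im, Complex.mul_im,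
    Complex.normSq_apply]
  simp only [Algebra.algebraMap_self, RingHom.id_apply]
  field_simp
  ring


lemma exists_rezero (z w : ℍ) (hzw : z ≠ w) :
    ∃ e : ℍ ≃ᵢ ℍ, (e z).re = 0 ∧ (e w).re = 0 := by
  rcases eq_or_ne z.re w.re with hre | hre
  · refine ⟨vaddIso (-z.re), ?_, ?_⟩
    · show ((-z.re) +ᵥ z).re = 0
      rw [vadd_re]; ring
    · show ((-z.re) +ᵥ w).re = 0
      rw [vadd_re, ← hre]; ring
  · set c : ℝ := ((z.re ^ 2 + z.im ^ 2) - (w.re ^ 2 + w.im ^ 2)) / (2 * (z.re - w.re)) with hc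
    set r : ℝ := √((z.re - c) ^ 2 + z.im ^ 2) with hr
    have him := z.im_pos
    have hwim := w.im_pos
    have hrpos : 0 < r := Real.sqrt_pos.2 (by positivity)
    have hr2 : r ^ 2 = (z.re - c) ^ 2 + z.im ^ 2 := Real.sq_sqrt (by positivity)
    have hw2 : (w.re - c) ^ 2 + w.im ^ 2 = r ^ 2 := by
      have hd : z.re - w.re ≠ 0 := sub_ne_zero.2 hre
      rw [hr2, hc]
      field_simp
      ring
    set k : ℝ := (√(2 * r))⁻¹ with hk
    have hkpos : 0 < k := by
      rw [hk]
      exact inv_pos.2 (Real.sqrt_pos.2 (by linarith))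
    have hk2 : k ^ 2 * (2 * r) = 1 := by
      rw [hk, inv_pow, Real.sq_sqrt (by linarith : (0:ℝ) ≤ 2 * r)]
      field_simp
    have hdet : k * (-(k * (c - r))) - (-(k * (c + r))) * k = 1 := by
      linear_combination hk2
    set g : Matrix.SpecialLinearGroup (Fin 2) ℝ :=
      ⟨!![k, -(k * (c + r)); k, -(k * (c - r))], by
        rw [Matrix.det_fin_two_of]; linear_combination hdet⟩ with hg
    have hgmat : (g : Matrix (Fin 2) (Fin 2) ℝ) = !![k, -(k * (c + r)); k, -(k * (c - r))] := rfl
    refine ⟨IsometryEquiv.constSMul g, ?_, ?_⟩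
    · show (g • z).re = 0
      rw [smul_re_of_entries g _ _ _ _ hgmat z, div_eq_zero_iff]
      left
      linear_combination (-(k ^ 2)) * hr2
    · show (g • w).re = 0
      rw [smul_re_of_entries g _ _ _ _ hgmat w, div_eq_zero_iff]
      left
      linear_combination (k ^ 2) * hw2

noncomputable def Sg : Matrix.SpecialLinearGroup (Fin 2) ℝ :=
  ⟨!![0, -1; 1, 0], by rw [Matrix.det_fin_two_of]; ring⟩

lemma Sg_re (x : ℍ) (hx : x.re = 0) : (Sg • x).re = 0 := by
  rw [smul_re_of_entries Sg 0 (-1) 1 0 rfl x, hx, div_eq_zero_iff]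
  left
  ring

lemma Sg_im (x : ℍ) (hx : x.re = 0) : (Sg • x).im = x.im⁻¹ := by
  rw [smul_im_of_entries Sg 0 (-1) 1 0 rfl x, hx]
  have := x.im_pos
  field_simp
  ring

lemma finish_aux (z w : ℍ) (e : ℍ ≃ᵢ ℍ) (h1 : (e z).re = 0) (h2 : (e z).im = 1)
    (h3 : (e w).re = 0) (h4 : 1 < (e w).im) : e z = pt 0 ∧ e w = pt (dist z w) := by
  have hz : e z = pt 0 := by
    apply UpperHalfPlane.ext'
    · rw [h1, pt_re]
    · rw [h2, pt_im, Real.exp_zero]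
  constructor
  · exact hz
  · have hL : dist z w = Real.log ((e w).im) := by
      rw [← e.dist_eq z w, UpperHalfPlane.dist_of_re_eq (by rw [h1, h3]), h2, Real.log_one,
        Real.dist_eq, zero_sub, abs_neg, abs_of_pos (Real.log_pos h4)]
    apply UpperHalfPlane.ext'
    · rw [h3, pt_re]
    · rw [pt_im, hL, Real.exp_log (by linarith : (0:ℝ) < (e w).im)]

lemma normalization (z w : ℍ) (hzw : z ≠ w) :
    ∃ e : ℍ ≃ᵢ ℍ, e z = pt 0 ∧ e w = pt (dist z w) := by
  obtain ⟨e₀, hz0, hw0⟩ := exists_rezero z w hzw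
  have hzim := (e₀ z).im_pos
  have hwim := (e₀ w).im_pos
  set a : {x : ℝ // 0 < x} := ⟨(e₀ z).im⁻¹, inv_pos.2 hzim⟩ with ha
  set e₁ := e₀.trans (posIso a) with he₁
  have hz1re : (e₁ z).re = 0 := by
    show (a • (e₀ z)).re = 0
    rw [pos_real_re, hz0, mul_zero]
  have hz1im : (e₁ z).im = 1 := by
    show (a • (e₀ z)).im = 1
    rw [pos_real_im]
    exact inv_mul_cancel₀ hzim.ne'
  have hw1re : (e₁ w).re = 0 := by
    show (a • (e₀ w)).re = 0
    rw [pos_real_re, hw0, mul_zero]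
  have hw1im : 0 < (e₁ w).im := (e₁ w).im_pos
  have hne : e₁ z ≠ e₁ w := fun h => hzw (e₁.injective h)
  have hbne : (e₁ w).im ≠ 1 := by
    intro h
    exact hne (UpperHalfPlane.ext' (by rw [hz1re, hw1re]) (by rw [hz1im, h]))
  rcases lt_or_gt_of_ne hbne with hb | hb
  · set e₂ := e₁.trans (IsometryEquiv.constSMul Sg) with he₂
    have h1 : (e₂ z).re = 0 := Sg_re _ hz1re
    have h2 : (e₂ z).im = 1 := by
      show (Sg • (e₁ z)).im = 1
      rw [Sg_im _ hz1re, hz1im, inv_one]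
    have h3 : (e₂ w).re = 0 := Sg_re _ hw1re
    have h4 : 1 < (e₂ w).im := by
      show 1 < (Sg • (e₁ w)).im
      rw [Sg_im _ hw1re]
      exact (one_lt_inv₀ hw1im).2 hb
    obtain ⟨p1, p2⟩ := finish_aux z w e₂ h1 h2 h3 h4
    exact ⟨e₂, p1, p2⟩
  · obtain ⟨p1, p2⟩ := finish_aux z w e₁ hz1re hz1im hw1re hb
    exact ⟨e₁, p1, p2⟩


lemma key (z w : ℍ) (hzw : z ≠ w) :
    ∃ Q : ℝ × ℝ → ℍ, Continuous Q ∧ Function.Surjective Q ∧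
      ∀ v s, dist (Q (v, s)) z ^ 2 - dist (Q (v, s)) w ^ 2 = v := by
  obtain ⟨e, hez, hew⟩ := normalization z w hzw
  have hq : 0 < dist z w := dist_pos.2 hzw
  obtain ⟨Q₀, hQc, hQs, hQd⟩ := key_normalized hq
  refine ⟨fun p => e.symm (Q₀ p), e.symm.continuous.comp hQc, ?_, ?_⟩
  · intro x
    obtain ⟨p, hp⟩ := hQs (e x)
    exact ⟨p, by show e.symm (Q₀ p) = x; rw [hp]; exact e.symm_apply_apply x⟩
  · intro v s
    have h1 : dist (e.symm (Q₀ (v, s))) z = dist (Q₀ (v, s)) (e z) := by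
      conv_lhs => rw [← e.dist_eq]
      rw [e.apply_symm_apply]
    have h2 : dist (e.symm (Q₀ (v, s))) w = dist (Q₀ (v, s)) (e w) := by
      conv_lhs => rw [← e.dist_eq]
      rw [e.apply_symm_apply]
    show dist (e.symm (Q₀ (v, s))) z ^ 2 - dist (e.symm (Q₀ (v, s))) w ^ 2 = v
    rw [h1, h2, hez, hew]
    exact hQd v s

lemma joined_H (x y : ℍ) : Joined x y := by
  have him : ∀ r : unitInterval, 0 < (((1 - (r : ℝ) : ℝ) : ℂ) * (x : ℂ)
      + (((r : ℝ) : ℝ) : ℂ) * (y : ℂ)).im := by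
    intro r
    have h0 : (0:ℝ) ≤ (r : ℝ) := r.2.1
    have h1 : (r : ℝ) ≤ 1 := r.2.2
    have hx := x.im_pos
    have hy := y.im_pos
    simp only [Complex.add_im, Complex.mul_im, Complex.ofReal_re, Complex.ofReal_im,
      UpperHalfPlane.coe_im, zero_mul, add_zero]
    rcases eq_or_lt_of_le h0 with h | h
    · rw [← h]; simpa using hx
    · nlinarith
  refine ⟨⟨⟨fun r => ⟨_, him r⟩, ?_⟩, ?_, ?_⟩⟩
  · apply continuous_induced_rng.2
    show Continuous fun r : unitInterval => ((1 - (r : ℝ) : ℝ) : ℂ) * (x : ℂ) + (((r : ℝ) : ℝ) : ℂ) * (y : ℂ)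
    apply Continuous.add
    · exact (Complex.continuous_ofReal.comp
        (continuous_const.sub continuous_subtype_val)).mul continuous_const
    · exact (Complex.continuous_ofReal.comp continuous_subtype_val).mul continuous_const
  · apply UpperHalfPlane.ext
    show ((1 - ((0 : unitInterval) : ℝ) : ℝ) : ℂ) * (x : ℂ) + _ = _
    norm_num
  · apply UpperHalfPlane.ext
    show ((1 - ((1 : unitInterval) : ℝ) : ℝ) : ℂ) * (x : ℂ) + _ = _
    norm_num


lemma aux_prod (z1 w1 : ℍ) (h1 : z1 ≠ w1) (z2 w2 : ℍ) :
    IsPathConnected {x : ℍ × ℍ |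
      dist x.1 z1 ^ 2 + dist x.2 z2 ^ 2 = dist x.1 w1 ^ 2 + dist x.2 w2 ^ 2} := by
  obtain ⟨Q, hQc, hQs, hQd⟩ := key z1 w1 h1
  set S := {x : ℍ × ℍ |
    dist x.1 z1 ^ 2 + dist x.2 z2 ^ 2 = dist x.1 w1 ^ 2 + dist x.2 w2 ^ 2} with hS
  set g2 : ℍ → ℝ := fun y => dist y z2 ^ 2 - dist y w2 ^ 2 with hg2
  have hg2c : Continuous g2 :=
    ((continuous_id.dist continuous_const).pow 2).sub
      ((continuous_id.dist continuous_const).pow 2)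
  have hmemS : ∀ (s : ℝ) (x2 : ℍ), (Q (-g2 x2, s), x2) ∈ S := by
    intro s x2
    have h := hQd (-g2 x2) s
    show dist (Q (-g2 x2, s)) z1 ^ 2 + dist x2 z2 ^ 2
        = dist (Q (-g2 x2, s)) w1 ^ 2 + dist x2 w2 ^ 2
    have : g2 x2 = dist x2 z2 ^ 2 - dist x2 w2 ^ 2 := rfl
    linarith [h, this]
  refine ⟨(Q (-g2 (pt 0), 0), pt 0), hmemS 0 (pt 0), ?_⟩
  rintro ⟨y1, y2⟩ hy
  have hy' : dist y1 z1 ^ 2 + dist y2 z2 ^ 2 = dist y1 w1 ^ 2 + dist y2 w2 ^ 2 := hy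
  have σ : Path (pt 0) y2 := (joined_H (pt 0) y2).somePath
  have pathA : JoinedIn S (Q (-g2 (pt 0), 0), pt 0) (Q (-g2 y2, 0), y2) := by
    refine ⟨⟨⟨fun r => (Q (-g2 (σ r), 0), σ r), ?_⟩, ?_, ?_⟩, ?_⟩
    · apply Continuous.prodMk
      · exact hQc.comp (((hg2c.comp σ.continuous).neg).prodMk continuous_const)
      · exact σ.continuous
    · show (Q (-g2 (σ 0), 0), σ 0) = (Q (-g2 (pt 0), 0), pt 0)
      rw [σ.source]
    · show (Q (-g2 (σ 1), 0), σ 1) = (Q (-g2 y2, 0), y2)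
      rw [σ.target]
    · intro r
      exact hmemS 0 (σ r)
  obtain ⟨⟨v', s'⟩, hp⟩ := hQs y1
  have hv' : v' = -g2 y2 := by
    have h := hQd v' s'
    rw [hp] at h
    have hg : g2 y2 = dist y2 z2 ^ 2 - dist y2 w2 ^ 2 := rfl
    linarith [h, hy', hg]
  have pathB : JoinedIn S (Q (-g2 y2, 0), y2) (y1, y2) := by
    refine ⟨⟨⟨fun r => (Q (-g2 y2, (r : ℝ) * s'), y2), ?_⟩, ?_, ?_⟩, ?_⟩
    · apply Continuous.prodMk
      · exact hQc.comp (continuous_const.prodMk (continuous_subtype_val.mul continuous_const))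
      · exact continuous_const
    · show (Q (-g2 y2, ((0 : unitInterval) : ℝ) * s'), y2) = (Q (-g2 y2, 0), y2)
      norm_num
    · show (Q (-g2 y2, ((1 : unitInterval) : ℝ) * s'), y2) = (y1, y2)
      rw [show ((1 : unitInterval) : ℝ) * s' = s' by norm_num, ← hv', hp]
    · intro r
      exact hmemS _ y2
  exact pathA.trans pathB





lemma bidisk_dist (u v : Bidisk) :
    dist u v = √(dist u.fst v.fst ^ 2 + dist u.snd v.snd ^ 2) := by
  rw [WithLp.prod_dist_eq_add (by norm_num : 0 < (2 : ENNReal).toReal)]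
  rw [Real.sqrt_eq_rpow]
  norm_num

lemma bidisk_mem_iff (x z w : Bidisk) :
    dist x z = dist x w ↔
      dist x.fst z.fst ^ 2 + dist x.snd z.snd ^ 2 = dist x.fst w.fst ^ 2 + dist x.snd w.snd ^ 2 := by
  rw [bidisk_dist, bidisk_dist]
  rw [show (√(dist x.fst z.fst ^ 2 + dist x.snd z.snd ^ 2) = √(dist x.fst w.fst ^ 2 + dist x.snd w.snd ^ 2))
    ↔ _ from Real.sqrt_inj (by positivity) (by positivity)]

noncomputable def bidiskHomeo : Bidisk ≃ₜ UpperHalfPlane × UpperHalfPlane where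
  toEquiv := WithLp.equiv 2 _
  continuous_toFun := WithLp.prod_continuous_ofLp _ _ _
  continuous_invFun := WithLp.prod_continuous_toLp _ _ _

lemma pathconn_univ : IsPathConnected (Set.univ : Set (UpperHalfPlane × UpperHalfPlane)) := by
  refine ⟨(pt 0, pt 0), trivial, ?_⟩
  rintro ⟨y1, y2⟩ -
  rw [joinedIn_univ]
  exact ⟨((joined_H (pt 0) y1).somePath).prod ((joined_H (pt 0) y2).somePath)⟩


end EqHyp

open EqHyp

/-- Every equidistant hypersurface `E(𝐳,𝐰) = {𝐱 : ρ(𝐱,𝐳) = ρ(𝐱,𝐰)}` in the bidisk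
is a connected subset. -/
theorem equidistant_hypersurface_connected (z w : Bidisk) :
    IsConnected {x : Bidisk | dist x z = dist x w} := by
  have hiff : ∀ x : Bidisk, x ∈ {x : Bidisk | dist x z = dist x w} ↔
      dist x.fst z.fst ^ 2 + dist x.snd z.snd ^ 2 = dist x.fst w.fst ^ 2 + dist x.snd w.snd ^ 2 :=
    fun x => bidisk_mem_iff x z w
  have himage : ∀ T : Set (UpperHalfPlane × UpperHalfPlane),
      IsPathConnected T →
      IsPathConnected (bidiskHomeo.symm '' T) :=
    fun T hT => hT.image bidiskHomeo.symm.continuous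
  by_cases h1 : z.fst ≠ w.fst
  · have hP := himage _ (aux_prod z.fst w.fst h1 z.snd w.snd)
    have hEq : bidiskHomeo.symm '' {x : UpperHalfPlane × UpperHalfPlane |
        dist x.1 z.fst ^ 2 + dist x.2 z.snd ^ 2 = dist x.1 w.fst ^ 2 + dist x.2 w.snd ^ 2}
        = {x : Bidisk | dist x z = dist x w} := by
      ext x
      constructor
      · rintro ⟨a, ha, rfl⟩
        exact (hiff _).2 ha
      · intro hx
        exact ⟨bidiskHomeo x, (hiff x).1 hx, bidiskHomeo.symm_apply_apply x⟩
    rw [← hEq]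
    exact hP.isConnected
  · push_neg at h1
    by_cases h2 : z.snd ≠ w.snd
    · have hP0 := aux_prod z.snd w.snd h2 z.fst w.fst
      have hPswap : IsPathConnected (Prod.swap '' {x : UpperHalfPlane × UpperHalfPlane |
          dist x.1 z.snd ^ 2 + dist x.2 z.fst ^ 2 = dist x.1 w.snd ^ 2 + dist x.2 w.fst ^ 2}) :=
        hP0.image continuous_swap
      have hP := himage _ hPswap
      have hEq : bidiskHomeo.symm '' (Prod.swap '' {x : UpperHalfPlane × UpperHalfPlane |
          dist x.1 z.snd ^ 2 + dist x.2 z.fst ^ 2 = dist x.1 w.snd ^ 2 + dist x.2 w.fst ^ 2})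
          = {x : Bidisk | dist x z = dist x w} := by
        ext x
        constructor
        · rintro ⟨a, ⟨b, hb, rfl⟩, rfl⟩
          apply (hiff _).2
          have : dist b.1 z.snd ^ 2 + dist b.2 z.fst ^ 2 = dist b.1 w.snd ^ 2 + dist b.2 w.fst ^ 2 := hb
          show dist b.2 z.fst ^ 2 + dist b.1 z.snd ^ 2 = dist b.2 w.fst ^ 2 + dist b.1 w.snd ^ 2
          linarith
        · intro hx
          refine ⟨bidiskHomeo x, ⟨Prod.swap (bidiskHomeo x), ?_, rfl⟩,
            bidiskHomeo.symm_apply_apply x⟩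
          have hx' := (hiff x).1 hx
          show dist x.snd z.snd ^ 2 + dist x.fst z.fst ^ 2 = dist x.snd w.snd ^ 2 + dist x.fst w.fst ^ 2
          linarith
      rw [← hEq]
      exact hP.isConnected
    · push_neg at h2
      have hzw : z = w := (WithLp.ext_iff 2).2 (Prod.ext h1 h2)
      have hEq : {x : Bidisk | dist x z = dist x w} = Set.univ := by
        ext x
        simp [hzw]
      rw [hEq]
      have hP := himage _ pathconn_univ
      have : bidiskHomeo.symm '' Set.univ = (Set.univ : Set Bidisk) := by
        rw [Set.image_univ]
        exact bidiskHomeo.symm.surjective.range_eq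
      rw [this] at hP
      exact hP.isConnected
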